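/- Let U be a real d×p matrix and V a real d×q matrix such that the block matrix [U V] (of size d×(p+q)) has rank p+q. Let Ũ be a real d×p' matrix and Ṽ a real d×q' matrix such that U·Uᵀ = Ũ·Ũᵀ and U·Uᵀ + V·Vᵀ = Ũ·Ũᵀ + Ṽ·Ṽᵀ. Then there exist a real p×p' matrix O₁ with O₁·O₁ᵀ = 1 (the p×p identity) and a real q×q' matrix O₂ with O₂·O₂ᵀ = 1 (the q×q identity) such that Ũ = U·O₁ and Ṽ = V·O₂. -/

import Mathlib

open Matrix

/-- A square matrix over ℝ with full rank is a unit. -/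
lemma aux_isUnit_of_rank {m : Type*} [Fintype m] [DecidableEq m]
    (M : Matrix m m ℝ) (h : M.rank = Fintype.card m) : IsUnit M := by
  rw [← Matrix.mulVec_injective_iff_isUnit]
  have hsurj : Function.Surjective M.mulVecLin := by
    rw [← LinearMap.range_eq_top]
    apply Submodule.eq_top_of_finrank_eq
    rw [← Matrix.rank, h, Module.finrank_pi]
  have hinj : Function.Injective M.mulVecLin :=
    (LinearMap.injective_iff_surjective).2 hsurj
  intro x y hxy
  exact hinj (by simpa using hxy)

/-- If `A` has trivial `mulVec` kernel then `AᵀA` is a unit. -/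
lemma aux_gram_isUnit {d n : Type*} [Fintype d] [Fintype n] [DecidableEq n]
    (A : Matrix d n ℝ) (hA : ∀ x : n → ℝ, A *ᵥ x = 0 → x = 0) :
    IsUnit (Aᵀ * A) := by
  rw [← Matrix.mulVec_injective_iff_isUnit]
  intro x y hxy
  have h0 : (Aᵀ * A) *ᵥ (x - y) = 0 := by
    rw [Matrix.mulVec_sub, hxy, sub_self]
  have hT : Aᵀ = Aᴴ := (Matrix.conjTranspose_eq_transpose_of_trivial A).symm
  rw [hT, Matrix.conjTranspose_mul_self_mulVec_eq_zero] at h0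
  exact sub_eq_zero.mp (hA _ h0)

/-- Key lemma: if `AᵀA` is invertible and `AAᵀ = BBᵀ`, then `B = A·O` with `OOᵀ = 1`. -/
lemma aux_key {d n m : Type*} [Fintype d] [Fintype n] [Fintype m] [DecidableEq n]
    (A : Matrix d n ℝ) (B : Matrix d m ℝ)
    (hA : IsUnit (Aᵀ * A)) (h : A * Aᵀ = B * Bᵀ) :
    ∃ O : Matrix n m ℝ, O * Oᵀ = 1 ∧ B = A * O := by
  set G := Aᵀ * A with hG
  have hGsymm : Gᵀ = G := by simp [hG, Matrix.transpose_mul]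
  have hGinv : G * G⁻¹ = 1 := Matrix.mul_nonsing_inv _ (((Matrix.isUnit_iff_isUnit_det G).mp hA))
  have hGinv' : G⁻¹ * G = 1 := Matrix.nonsing_inv_mul _ (((Matrix.isUnit_iff_isUnit_det G).mp hA))
  have hGit : (G⁻¹)ᵀ = G⁻¹ := by rw [Matrix.transpose_nonsing_inv, hGsymm]
  set O := G⁻¹ * Aᵀ * B with hO
  have hOO : O * Oᵀ = 1 := by
    have e1 : O * Oᵀ = G⁻¹ * (Aᵀ * ((B * Bᵀ) * A)) * G⁻¹ := by
      simp only [hO, Matrix.transpose_mul, Matrix.transpose_transpose, hGit]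
      simp only [Matrix.mul_assoc]
    have e2 : Aᵀ * (A * Aᵀ * A) = G * G := by rw [hG]; simp only [Matrix.mul_assoc]
    rw [e1, ← h, e2]
    calc G⁻¹ * (G * G) * G⁻¹ = (G⁻¹ * G) * (G * G⁻¹) := by simp only [Matrix.mul_assoc]
    _ = 1 := by rw [hGinv, hGinv', one_mul]
  refine ⟨O, hOO, ?_⟩
  have hPB : (A * O) * Bᵀ = A * Aᵀ := by
    have e1 : (A * O) * Bᵀ = A * G⁻¹ * (Aᵀ * (B * Bᵀ)) := by rw [hO]; simp only [Matrix.mul_assoc]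
    have e2 : Aᵀ * (A * Aᵀ) = G * Aᵀ := by rw [hG]; simp only [Matrix.mul_assoc]
    rw [e1, ← h, e2, ← Matrix.mul_assoc (A * G⁻¹), Matrix.mul_assoc A, hGinv', Matrix.mul_one]
  have hBP : B * (A * O)ᵀ = A * Aᵀ := by
    have := congrArg Matrix.transpose hPB
    simpa only [Matrix.transpose_mul, Matrix.transpose_transpose, Matrix.mul_assoc] using this
  have hPP : (A * O) * (A * O)ᵀ = A * Aᵀ := by
    calc (A * O) * (A * O)ᵀ = A * (O * Oᵀ) * Aᵀ := by
          simp only [Matrix.transpose_mul]; simp only [Matrix.mul_assoc]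
    _ = A * Aᵀ := by rw [hOO, Matrix.mul_one]
  have hNN : (B - A * O) * (B - A * O)ᵀ = 0 := by
    rw [Matrix.transpose_sub, Matrix.sub_mul, Matrix.mul_sub, Matrix.mul_sub, hBP, hPB, hPP,
      ← h]
    abel
  have hT : (B - A * O)ᵀ = (B - A * O)ᴴ :=
    (Matrix.conjTranspose_eq_transpose_of_trivial _).symm
  rw [hT, Matrix.self_mul_conjTranspose_eq_zero] at hNN
  exact sub_eq_zero.mp hNN

/-- Block-wise identifiability of the misspecified linear contrastive model: if
`[U V]` has full column rank `p + q`, `UUᵀ = ŨŨᵀ` and `UUᵀ + VVᵀ = ŨŨᵀ + ṼṼᵀ`, then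
`Ũ = U·O₁` and `Ṽ = V·O₂` for matrices `O₁, O₂` with orthonormal rows. -/
theorem linear_contrastive_identifiability_misspec
    (d p q p' q' : ℕ)
    (U : Matrix (Fin d) (Fin p) ℝ) (V : Matrix (Fin d) (Fin q) ℝ)
    (hrank : (Matrix.fromCols U V).rank = p + q)
    (U' : Matrix (Fin d) (Fin p') ℝ) (V' : Matrix (Fin d) (Fin q') ℝ)
    (h1 : U * Uᵀ = U' * U'ᵀ)
    (h2 : U * Uᵀ + V * Vᵀ = U' * U'ᵀ + V' * V'ᵀ) :
    ∃ (O₁ : Matrix (Fin p) (Fin p') ℝ) (O₂ : Matrix (Fin q) (Fin q') ℝ),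
      O₁ * O₁ᵀ = 1 ∧ O₂ * O₂ᵀ = 1 ∧ U' = U * O₁ ∧ V' = V * O₂ := by
  have hVV : V * Vᵀ = V' * V'ᵀ := by
    rw [h1] at h2
    exact add_left_cancel h2
  set W := Matrix.fromCols U V with hW
  have hWunit : IsUnit (Wᵀ * W) := by
    apply aux_isUnit_of_rank
    rw [Matrix.rank_transpose_mul_self, hrank]
    simp
  have hWinj : ∀ x : (Fin p ⊕ Fin q) → ℝ, W *ᵥ x = 0 → x = 0 := by
    intro x hx
    have hinj := Matrix.mulVec_injective_iff_isUnit.mpr hWunit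
    have : (Wᵀ * W) *ᵥ x = (Wᵀ * W) *ᵥ 0 := by
      rw [← Matrix.mulVec_mulVec, hx, Matrix.mulVec_zero, Matrix.mulVec_zero]
    exact hinj this
  have hUinj : ∀ x : Fin p → ℝ, U *ᵥ x = 0 → x = 0 := by
    intro x hx
    have : W *ᵥ (Sum.elim x 0) = 0 := by
      rw [hW, Matrix.fromCols_mulVec_sumElim, hx, Matrix.mulVec_zero, add_zero]
    have h0 := hWinj _ this
    funext i
    exact congrFun h0 (Sum.inl i)
  have hVinj : ∀ x : Fin q → ℝ, V *ᵥ x = 0 → x = 0 := by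
    intro x hx
    have : W *ᵥ (Sum.elim 0 x) = 0 := by
      rw [hW, Matrix.fromCols_mulVec_sumElim, hx, Matrix.mulVec_zero, zero_add]
    have h0 := hWinj _ this
    funext i
    exact congrFun h0 (Sum.inr i)
  obtain ⟨O₁, hO₁, hU'⟩ := aux_key U U' (aux_gram_isUnit U hUinj) h1
  obtain ⟨O₂, hO₂, hV'⟩ := aux_key V V' (aux_gram_isUnit V hVinj) hVV
  exact ⟨O₁, O₂, hO₁, hO₂, hU', hV'⟩
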